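/- Let h be a norm on ℂⁿ with open unit ball D = { z : h(z) < 1 }, and let F : D → D be a biholomorphic automorphism of D with h(F(0)) = a. Then for every z ∈ D, h(F(z)) ≤ (h(z) + a)/(1 + a·h(z)). -/

import Mathlib

open Metric

private lemma normSq_identity (b w : ℂ) :
    Complex.normSq (1 - (starRingEnd ℂ) b * w) - Complex.normSq (w - b) =
      (1 - Complex.normSq b) * (1 - Complex.normSq w) := by
  simp [Complex.normSq_apply, Complex.mul_re, Complex.mul_im, Complex.sub_re, Complex.sub_im]
  ring

private lemma alg_bound {w b : ℂ} {r : ℝ} (hw : ‖w‖ < 1) (hb : ‖b‖ < 1)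
    (hr0 : 0 ≤ r) (hr1 : r < 1)
    (h : ‖w - b‖ ≤ r * ‖1 - (starRingEnd ℂ) b * w‖) :
    ‖w‖ ≤ (r + ‖b‖) / (1 + ‖b‖ * r) := by
  set A := ‖1 - (starRingEnd ℂ) b * w‖ with hA
  set B := ‖w - b‖ with hB
  have hident : A ^ 2 - B ^ 2 = (1 - ‖b‖ ^ 2) * (1 - ‖w‖ ^ 2) := by
    have e := normSq_identity b w
    have e1 : Complex.normSq (w - b) = B ^ 2 := by rw [Complex.normSq_eq_norm_sq]
    have e2 : Complex.normSq (1 - (starRingEnd ℂ) b * w) = A ^ 2 := by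
      rw [Complex.normSq_eq_norm_sq]
    have e3 : Complex.normSq b = ‖b‖ ^ 2 := by rw [Complex.normSq_eq_norm_sq]
    have e4 : Complex.normSq w = ‖w‖ ^ 2 := by rw [Complex.normSq_eq_norm_sq]
    rw [e1, e2, e3, e4] at e
    exact e
  have hAC : 1 - ‖b‖ * ‖w‖ ≤ A := by
    have h1 : ‖(1 : ℂ)‖ - ‖(starRingEnd ℂ) b * w‖ ≤ A := norm_sub_norm_le _ _
    simpa [norm_mul] using h1
  have hB0 : 0 ≤ B := norm_nonneg _
  have hC0 : 0 < 1 - ‖b‖ * ‖w‖ := by nlinarith [norm_nonneg b, norm_nonneg w]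
  have hden : 0 < 1 + ‖b‖ * r := by positivity
  rw [le_div_iff₀ hden]
  -- goal: ‖w‖ * (1 + ‖b‖ * r) ≤ r + ‖b‖, equivalent to D ≤ r * C
  have hD2 : (‖w‖ - ‖b‖) ^ 2 ≤ r ^ 2 * (1 - ‖b‖ * ‖w‖) ^ 2 := by
    have h1 : B ^ 2 ≤ r ^ 2 * A ^ 2 := by nlinarith [norm_nonneg (1 - (starRingEnd ℂ) b * w)]
    have hA2 : (1 - ‖b‖ * ‖w‖) ^ 2 ≤ A ^ 2 := by nlinarith
    have hr2 : (0:ℝ) ≤ 1 - r ^ 2 := by nlinarith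
    nlinarith [mul_nonneg hr2 (sub_nonneg.2 hA2)]
  rcases le_or_gt (‖w‖ - ‖b‖) 0 with hle | hgt
  · nlinarith [mul_nonneg (mul_nonneg hr0 (norm_nonneg b)) (norm_nonneg w)]
  · have : ‖w‖ - ‖b‖ ≤ r * (1 - ‖b‖ * ‖w‖) := by
      nlinarith [mul_nonneg hr0 (le_of_lt hC0)]
    nlinarith

private lemma disc_schwarz_pick (g : ℂ → ℂ) (hg : DifferentiableOn ℂ g (ball 0 1))
    (hm : Set.MapsTo g (ball (0 : ℂ) 1) (ball (0 : ℂ) 1)) {z : ℂ} (hz : z ∈ ball (0 : ℂ) 1) :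
    ‖g z‖ ≤ (‖z‖ + ‖g 0‖) / (1 + ‖g 0‖ * ‖z‖) := by
  set b := g 0 with hbdef
  have hb : ‖b‖ < 1 := by
    simpa [hbdef] using mem_ball_zero_iff.1 (hm (mem_ball_self one_pos))
  have hgw : ∀ w ∈ ball (0 : ℂ) 1, ‖g w‖ < 1 := fun w hw => mem_ball_zero_iff.1 (hm hw)
  have hdenne : ∀ w ∈ ball (0 : ℂ) 1, 1 - (starRingEnd ℂ) b * g w ≠ 0 := by
    intro w hw h0
    have : ‖(starRingEnd ℂ) b * g w‖ < 1 := by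
      rw [norm_mul]
      calc ‖(starRingEnd ℂ) b‖ * ‖g w‖ = ‖b‖ * ‖g w‖ := by rw [RCLike.norm_conj]
        _ < 1 := by nlinarith [norm_nonneg b, norm_nonneg (g w), hgw w hw]
    have heq : (starRingEnd ℂ) b * g w = 1 := by linear_combination -h0
    rw [heq] at this; simp at this
  set h : ℂ → ℂ := fun w => (g w - b) / (1 - (starRingEnd ℂ) b * g w) with hhdef
  have hhd : DifferentiableOn ℂ h (ball 0 1) := by
    apply DifferentiableOn.div
    · exact hg.sub (differentiableOn_const b)
    · exact (differentiableOn_const _).sub ((differentiableOn_const _).mul hg)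
    · exact hdenne
  have hnorm : ∀ w ∈ ball (0 : ℂ) 1,
      ‖g w - b‖ ^ 2 < ‖1 - (starRingEnd ℂ) b * g w‖ ^ 2 := by
    intro w hw
    have := normSq_identity b (g w)
    have h2 : (1 - ‖b‖ ^ 2) * (1 - ‖g w‖ ^ 2) > 0 := by
      have h5 := hgw w hw
      exact mul_pos (by nlinarith [norm_nonneg b]) (by nlinarith [norm_nonneg (g w)])
    have h3 : Complex.normSq (1 - (starRingEnd ℂ) b * g w) - Complex.normSq (g w - b) > 0 := by
      rw [this]
      have := h2
      simpa [← Complex.sq_norm, Complex.sq_norm, ← Complex.normSq_eq_norm_sq] using this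
    have e1 : Complex.normSq (g w - b) = ‖g w - b‖ ^ 2 := by
      rw [Complex.normSq_eq_norm_sq]
    have e2 : Complex.normSq (1 - (starRingEnd ℂ) b * g w)
        = ‖1 - (starRingEnd ℂ) b * g w‖ ^ 2 := by
      rw [Complex.normSq_eq_norm_sq]
    linarith [e1 ▸ e2 ▸ h3]
  have hhm : Set.MapsTo h (ball (0 : ℂ) 1) (ball (0 : ℂ) 1) := by
    intro w hw
    rw [mem_ball_zero_iff, hhdef]
    have hd := hdenne w hw
    have hdn : 0 < ‖1 - (starRingEnd ℂ) b * g w‖ := norm_pos_iff.2 hd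
    rw [norm_div, div_lt_one hdn]
    have := hnorm w hw
    nlinarith [norm_nonneg (g w - b)]
  have hh0 : h 0 = 0 := by simp [hhdef, hbdef]
  have hsch : ‖h z‖ ≤ ‖z‖ := by
    have := Complex.norm_le_norm_of_mapsTo_ball hhd (hhm.mono_right ball_subset_closedBall) hh0
      (by simpa [Complex.norm_def] using mem_ball_zero_iff.1 hz)
    simpa [Complex.norm_def] using this
  have hkey : ‖g z - b‖ ≤ ‖z‖ * ‖1 - (starRingEnd ℂ) b * g z‖ := by
    have hd := hdenne z hz
    have hdn : 0 < ‖1 - (starRingEnd ℂ) b * g z‖ := norm_pos_iff.2 hd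
    have : ‖g z - b‖ / ‖1 - (starRingEnd ℂ) b * g z‖ ≤ ‖z‖ := by
      simpa [hhdef, norm_div] using hsch
    have h6 := mul_le_mul_of_nonneg_right this hdn.le
    rwa [div_mul_cancel₀ _ hdn.ne'] at h6
  exact alg_bound (hgw z hz) hb (norm_nonneg z) (mem_ball_zero_iff.1 hz) hkey

private lemma mono_bound {r b a : ℝ} (hr0 : 0 ≤ r) (hr1 : r ≤ 1) (hb : 0 ≤ b) (hba : b ≤ a) :
    (r + b) / (1 + b * r) ≤ (r + a) / (1 + a * r) := by
  have h1 : 0 < 1 + b * r := by nlinarith [mul_nonneg hb hr0]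
  have h2 : 0 < 1 + a * r := by nlinarith [mul_nonneg (hb.trans hba) hr0]
  rw [div_le_div_iff₀ h1 h2]
  have hr2 : r ^ 2 ≤ 1 := by nlinarith
  nlinarith [mul_nonneg (sub_nonneg.2 hba) (sub_nonneg.2 hr2)]

theorem automorphism_schwarz_pick_bound
    {E : Type*} [NormedAddCommGroup E] [NormedSpace ℂ E] [FiniteDimensional ℂ E]
    (F G : E → E)
    (hF : DifferentiableOn ℂ F (ball (0 : E) 1))
    (hFmaps : Set.MapsTo F (ball (0 : E) 1) (ball (0 : E) 1))
    (hG : DifferentiableOn ℂ G (ball (0 : E) 1))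
    (hGmaps : Set.MapsTo G (ball (0 : E) 1) (ball (0 : E) 1))
    (hGF : ∀ z ∈ ball (0 : E) 1, G (F z) = z)
    (hFG : ∀ w ∈ ball (0 : E) 1, F (G w) = w)
    (a : ℝ) (ha : ‖F 0‖ = a) :
    ∀ z ∈ ball (0 : E) 1, ‖F z‖ ≤ (‖z‖ + a) / (1 + a * ‖z‖) := by
  intro z hz
  have ha0 : 0 ≤ a := ha ▸ norm_nonneg _
  have hz1 : ‖z‖ < 1 := mem_ball_zero_iff.1 hz
  have hden : 0 < 1 + a * ‖z‖ := by nlinarith [mul_nonneg ha0 (norm_nonneg z)]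
  by_cases hz0 : z = 0
  · subst hz0
    simp only [norm_zero, mul_zero, add_zero, zero_add]
    rw [ha]; simp
  by_cases hFz : F z = 0
  · rw [hFz, norm_zero]
    exact div_nonneg (by nlinarith [norm_nonneg z]) hden.le
  obtain ⟨φ, hφ1, hφ2⟩ := exists_dual_vector ℂ (F z) (norm_ne_zero_iff.2 hFz)
  have hzn : (‖z‖ : ℂ) ≠ 0 := by
    simpa using norm_ne_zero_iff.2 hz0
  set u : E := (‖z‖ : ℂ)⁻¹ • z with hu
  have hun : ‖u‖ = 1 := by
    rw [hu, norm_smul, norm_inv, Complex.norm_real, Real.norm_eq_abs,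
      abs_of_nonneg (norm_nonneg z)]
    rw [inv_mul_cancel₀ (norm_ne_zero_iff.2 hz0)]
  have hmapsu : ∀ w ∈ ball (0 : ℂ) 1, w • u ∈ ball (0 : E) 1 := by
    intro w hw
    rw [mem_ball_zero_iff, norm_smul, hun, mul_one]
    exact mem_ball_zero_iff.1 hw
  set g : ℂ → ℂ := fun w => φ (F (w • u)) with hg
  have hgd : DifferentiableOn ℂ g (ball 0 1) := by
    apply (φ.differentiable.comp_differentiableOn)
    exact hF.comp ((differentiable_id.smul_const u).differentiableOn) hmapsu
  have hgm : Set.MapsTo g (ball (0 : ℂ) 1) (ball (0 : ℂ) 1) := by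
    intro w hw
    rw [mem_ball_zero_iff]
    calc ‖φ (F (w • u))‖ ≤ ‖φ‖ * ‖F (w • u)‖ := φ.le_opNorm _
      _ = ‖F (w • u)‖ := by rw [hφ1, one_mul]
      _ < 1 := mem_ball_zero_iff.1 (hFmaps (hmapsu w hw))
  have hzmem : (‖z‖ : ℂ) ∈ ball (0 : ℂ) 1 := by
    rw [mem_ball_zero_iff, Complex.norm_real, Real.norm_eq_abs, abs_of_nonneg (norm_nonneg z)]
    exact hz1
  have hnz : ‖(‖z‖ : ℂ)‖ = ‖z‖ := by
    rw [Complex.norm_real, Real.norm_eq_abs, abs_of_nonneg (norm_nonneg z)]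
  have hgz : (‖z‖ : ℂ) • u = z := by
    rw [hu, smul_smul, mul_inv_cancel₀ hzn, one_smul]
  have hgval : ‖g (‖z‖ : ℂ)‖ = ‖F z‖ := by
    rw [hg]; simp only [hgz, hφ2]
    rw [RCLike.norm_ofReal, abs_of_nonneg (norm_nonneg _)]
  have hg0 : ‖g 0‖ ≤ a := by
    rw [hg]; simp only [zero_smul]
    calc ‖φ (F 0)‖ ≤ ‖φ‖ * ‖F 0‖ := φ.le_opNorm _
      _ = a := by rw [hφ1, one_mul, ha]
  have hsp := disc_schwarz_pick g hgd hgm hzmem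
  rw [hgval, hnz] at hsp
  exact hsp.trans (mono_bound (norm_nonneg z) (le_of_lt hz1) (norm_nonneg _) hg0)
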